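/- arXiv:2502.10385 — 2 statements merged into one kernel-verified Lean document; each statement's English description precedes it below -/
import Mathlib

section
/- Let d, n be positive integers and ε > 0. Define the coding rate R_ε(Γ) := (1/2)·log det(I + (d/ε²)·Γ) for symmetric positive semidefinite Γ ∈ ℝ^{d×d}. Then for every matrix Z ∈ ℝ^{d×n} all of whose columns have unit ℓ²-norm, the gradient (with respect to the Frobenius inner product on ℝ^{d×n}) of the map Z ↦ R_ε(ZZᵀ/n) satisfies ‖∇_Z R_ε(ZZᵀ/n)‖_F ≤ √(d·min{d,n}/n)/(2ε). -/
open Matrix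

attribute [local instance] Matrix.normedAddCommGroup Matrix.normedSpace

/-- Frobenius norm of a real matrix: `‖A‖_F = √(tr (Aᵀ A))`. -/
noncomputable def frobNorm {d n : ℕ} (A : Matrix (Fin d) (Fin n) ℝ) : ℝ :=
  Real.sqrt ((Aᵀ * A).trace)

lemma psd_smul {k : ℕ} {S : Matrix (Fin k) (Fin k) ℝ} (hS : S.PosSemidef)
    {c : ℝ} (hc : 0 ≤ c) : (c • S).PosSemidef := by
  constructor
  · unfold Matrix.IsHermitian
    rw [Matrix.conjTranspose_smul]
    rw [hS.1]
    simp
  · intro x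
    have := hS.2 x
    simpa [Finsupp.sum, Finset.mul_sum, mul_assoc, mul_left_comm] using mul_nonneg hc this

lemma psd_trace_nonneg {k : ℕ} {S : Matrix (Fin k) (Fin k) ℝ} (hS : S.PosSemidef) :
    0 ≤ S.trace := by
  have h : ∀ i, 0 ≤ S i i := by
    intro i
    have := hS.2 (Finsupp.single i 1)
    simpa [Finsupp.sum_single_index] using this
  exact Finset.sum_nonneg fun i _ => h i

lemma psd_trace_le {k : ℕ} {S T : Matrix (Fin k) (Fin k) ℝ} (h : (T - S).PosSemidef) :
    S.trace ≤ T.trace := by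
  have := psd_trace_nonneg h
  rw [Matrix.trace_sub] at this
  linarith

lemma conjT_eq_T {a b : ℕ} (M : Matrix (Fin a) (Fin b) ℝ) : Mᴴ = Mᵀ := by
  ext i j; simp [Matrix.conjTranspose_apply]

lemma key_bound {k : ℕ} {S : Matrix (Fin k) (Fin k) ℝ} (hS : S.PosSemidef)
    {α : ℝ} (hα : 0 < α) :
    ((α * α) • ((1 + α • S)⁻¹ * S * (1 + α • S)⁻¹)).trace ≤ α / 4 * k := by
  set A : Matrix (Fin k) (Fin k) ℝ := 1 + α • S with hAdef
  have hA : A.PosDef := Matrix.PosDef.add_posSemidef Matrix.PosDef.one (psd_smul hS hα.le)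
  have hAunit : IsUnit A.det := isUnit_iff_ne_zero.mpr hA.det_pos.ne'
  have hAinv : A⁻¹ * A = 1 := Matrix.nonsing_inv_mul A hAunit
  have hAinv' : A * A⁻¹ = 1 := Matrix.mul_nonsing_inv A hAunit
  have hSsymm : Sᵀ = S := by
    have h2 : Sᴴ = S := hS.1
    rwa [conjT_eq_T] at h2
  have hAsymm : Aᵀ = A := by
    rw [hAdef]; simp [Matrix.transpose_add, Matrix.transpose_smul, hSsymm]
  have hAinvsymm : (A⁻¹)ᵀ = A⁻¹ := by
    rw [Matrix.transpose_nonsing_inv, hAsymm]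
  set B : Matrix (Fin k) (Fin k) ℝ := A⁻¹ * (1 - α • S) with hBdef
  have hBT : Bᵀ = (1 - α • S) * A⁻¹ := by
    rw [hBdef, Matrix.transpose_mul, hAinvsymm]
    congr 1
    simp [Matrix.transpose_sub, Matrix.transpose_smul, hSsymm]
  have hsq : (1 - α • S) * (1 - α • S) = A * A - (4 * α) • S := by
    rw [hAdef]
    simp only [Matrix.mul_sub, Matrix.sub_mul, Matrix.mul_add, Matrix.add_mul,
      Matrix.one_mul, Matrix.mul_one, Matrix.smul_mul, Matrix.mul_smul, smul_smul]
    abel_nf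
    module
  have hident : (α / 4) • (B * Bᵀ) =
      (α / 4) • (1 : Matrix (Fin k) (Fin k) ℝ)
        - (α * α) • (A⁻¹ * S * A⁻¹) := by
    rw [hBT, hBdef]
    have : A⁻¹ * (1 - α • S) * ((1 - α • S) * A⁻¹)
        = A⁻¹ * ((1 - α • S) * (1 - α • S)) * A⁻¹ := by
      noncomm_ring
    rw [this, hsq]
    have expand : A⁻¹ * (A * A - (4 * α) • S) * A⁻¹
        = 1 - (4 * α) • (A⁻¹ * S * A⁻¹) := by
      rw [Matrix.mul_sub, Matrix.sub_mul]
      rw [show A⁻¹ * (A * A) = A by rw [← Matrix.mul_assoc, hAinv, Matrix.one_mul]]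
      rw [hAinv']
      simp [Matrix.mul_smul, Matrix.smul_mul, Matrix.mul_assoc]
    rw [expand, smul_sub, smul_smul]
    congr 2
    ring
  have hpsd : ((α / 4) • (1 : Matrix (Fin k) (Fin k) ℝ)
      - (α * α) • (A⁻¹ * S * A⁻¹)).PosSemidef := by
    rw [← hident]
    refine psd_smul ?_ (by positivity)
    have := Matrix.posSemidef_self_mul_conjTranspose B
    rwa [conjT_eq_T] at this
  have := psd_trace_le hpsd
  calc ((α * α) • (A⁻¹ * S * A⁻¹)).trace
      ≤ ((α / 4) • (1 : Matrix (Fin k) (Fin k) ℝ)).trace := this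
    _ = α / 4 * k := by
        rw [Matrix.trace_smul, Matrix.trace_one]
        simp [smul_eq_mul]
open Matrix

attribute [local instance] Matrix.normedAddCommGroup Matrix.normedSpace

variable {k : ℕ}

noncomputable def detCML (k : ℕ) :
    ContinuousMultilinearMap ℝ (fun _ : Fin k => (Fin k → ℝ)) ℝ where
  toMultilinearMap := (Matrix.detRowAlternating (R := ℝ) (n := Fin k)).toMultilinearMap
  cont := by
    have : Continuous fun M : Matrix (Fin k) (Fin k) ℝ => M.det :=
      Continuous.matrix_det continuous_id
    exact this

lemma detCML_apply (M : Matrix (Fin k) (Fin k) ℝ) : detCML k M = M.det := rfl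

lemma hasFDerivAt_det (A : Matrix (Fin k) (Fin k) ℝ) :
    HasFDerivAt (fun M : Matrix (Fin k) (Fin k) ℝ => M.det)
      ((detCML k).linearDeriv A) A :=
  (detCML k).hasFDerivAt A

example (A H : Matrix (Fin k) (Fin k) ℝ) :
    (detCML k).linearDeriv A H = ∑ i, ((A.updateRow i (H i)).det) := by
  erw [ContinuousMultilinearMap.linearDeriv_apply]
  rfl

lemma sum_det_updateRow (A H : Matrix (Fin k) (Fin k) ℝ) :
    ∑ i, (A.updateRow i (H i)).det = (A.adjugate * H).trace := by
  have hrow : ∀ i : Fin k, (A.updateRow i (H i)).det = ∑ j, H i j * A.adjugate j i := by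
    intro i
    have hb : H i = ∑ j, H i j • (Pi.single j 1 : Fin k → ℝ) := by
      ext j'; simp [Pi.single_apply]
    rw [← Matrix.cramer_transpose_apply, hb, map_sum]
    simp only [LinearMap.map_smul, Finset.sum_apply, Pi.smul_apply, smul_eq_mul,
      Matrix.cramer_transpose_apply, ← Matrix.adjugate_apply]
    simp [Pi.single_apply]
  simp only [hrow, Matrix.trace, Matrix.diag, Matrix.mul_apply]
  rw [Finset.sum_comm]
  congr 1; ext i; congr 1; ext j; ring
open Matrix

attribute [local instance] Matrix.normedAddCommGroup Matrix.normedSpace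

variable {d n : ℕ}

/-- the derivative of `W ↦ 1 + α • (W * Wᵀ)` as a linear map -/
noncomputable def gDeriv (α : ℝ) (Z : Matrix (Fin d) (Fin n) ℝ) :
    Matrix (Fin d) (Fin n) ℝ →L[ℝ] Matrix (Fin d) (Fin d) ℝ :=
  LinearMap.toContinuousLinearMap
    { toFun := fun H => α • (H * Zᵀ + Z * Hᵀ)
      map_add' := by
        intro H K
        simp [Matrix.add_mul, Matrix.mul_add, Matrix.transpose_add, smul_add]
        abel
      map_smul' := by
        intro c H
        simp [Matrix.smul_mul, Matrix.mul_smul, Matrix.transpose_smul, smul_smul, smul_add]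
        rw [mul_comm] }

lemma gDeriv_apply (α : ℝ) (Z H : Matrix (Fin d) (Fin n) ℝ) :
    gDeriv α Z H = α • (H * Zᵀ + Z * Hᵀ) := rfl

lemma hasFDerivAt_g (α : ℝ) (Z : Matrix (Fin d) (Fin n) ℝ) :
    HasFDerivAt (fun W : Matrix (Fin d) (Fin n) ℝ =>
      (1 : Matrix (Fin d) (Fin d) ℝ) + α • (W * Wᵀ)) (gDeriv α Z) Z := by
  refine hasFDerivAt_iff_isLittleO_nhds_zero.mpr ?_
  have heq : (fun H : Matrix (Fin d) (Fin n) ℝ =>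
      ((1 : Matrix (Fin d) (Fin d) ℝ) + α • ((Z + H) * (Z + H)ᵀ))
        - (1 + α • (Z * Zᵀ)) - gDeriv α Z H)
      = fun H => α • (H * Hᵀ) := by
    funext H
    rw [gDeriv_apply]
    simp only [Matrix.transpose_add, Matrix.add_mul, Matrix.mul_add, smul_add]
    abel
  erw [heq]
  have h1 : (fun H : Matrix (Fin d) (Fin n) ℝ => α • (H * Hᵀ))
      =O[nhds 0] fun H => ‖H‖ * ‖H‖ := by
    apply Asymptotics.IsBigO.of_bound (|α| * n)
    filter_upwards with H
    have hno : ‖‖H‖ * ‖H‖‖ = ‖H‖ * ‖H‖ := by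
      rw [Real.norm_eq_abs]; exact abs_of_nonneg (by positivity)
    rw [hno, norm_smul, Real.norm_eq_abs]
    have hb : ‖H * Hᵀ‖ ≤ n * (‖H‖ * ‖H‖) := by
      rw [Matrix.norm_le_iff (by positivity)]
      intro i j
      rw [Matrix.mul_apply]
      calc ‖∑ k, H i k * Hᵀ k j‖ ≤ ∑ k : Fin n, ‖H i k * Hᵀ k j‖ :=
            norm_sum_le _ _
        _ ≤ ∑ _k : Fin n, ‖H‖ * ‖H‖ := by
            refine Finset.sum_le_sum fun k _ => ?_
            rw [norm_mul]
            exact mul_le_mul (Matrix.norm_entry_le_entrywise_sup_norm H)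
              (Matrix.norm_entry_le_entrywise_sup_norm Hᵀ |>.trans_eq
                (by rw [Matrix.norm_transpose])) (norm_nonneg _) (norm_nonneg _)
        _ = n * (‖H‖ * ‖H‖) := by simp [Finset.sum_const, mul_comm]
    calc |α| * ‖H * Hᵀ‖ ≤ |α| * (n * (‖H‖ * ‖H‖)) :=
          mul_le_mul_of_nonneg_left hb (abs_nonneg _)
      _ = |α| * n * (‖H‖ * ‖H‖) := by ring
  have h2 : (fun H : Matrix (Fin d) (Fin n) ℝ => ‖H‖ * ‖H‖)
      =o[nhds 0] fun H => (1 : ℝ) * ‖H‖ := by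
    apply Asymptotics.IsLittleO.mul_isBigO
    · rw [Asymptotics.isLittleO_one_iff]
      exact tendsto_norm_zero
    · exact Asymptotics.isBigO_refl _ _
  simp only [one_mul] at h2
  exact Asymptotics.isLittleO_norm_right.mp (h1.trans_isLittleO h2)

lemma trace_transpose_mul_std {d n : ℕ} (M : Matrix (Fin d) (Fin n) ℝ) (i : Fin d) (j : Fin n) :
    (Mᵀ * Matrix.single i j (1:ℝ)).trace = M i j := by
  simp [Matrix.trace, Matrix.diag, Matrix.mul_apply, Matrix.single,
    Matrix.transpose_apply, ite_and, mul_ite, mul_one, mul_zero, Finset.sum_ite_eq,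
    Finset.sum_ite_eq']

lemma fderiv_f (α : ℝ) (Z : Matrix (Fin d) (Fin n) ℝ)
    (hdet : ((1 : Matrix (Fin d) (Fin d) ℝ) + α • (Z * Zᵀ)).det ≠ 0)
    (hAinvsymm : (((1 : Matrix (Fin d) (Fin d) ℝ) + α • (Z * Zᵀ))⁻¹)ᵀ
      = ((1 : Matrix (Fin d) (Fin d) ℝ) + α • (Z * Zᵀ))⁻¹)
    (H : Matrix (Fin d) (Fin n) ℝ) :
    fderiv ℝ (fun W : Matrix (Fin d) (Fin n) ℝ =>
      (1/2 : ℝ) * Real.log (((1 : Matrix (Fin d) (Fin d) ℝ) + α • (W * Wᵀ)).det)) Z H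
    = ((α • (((1 : Matrix (Fin d) (Fin d) ℝ) + α • (Z * Zᵀ))⁻¹ * Z))ᵀ * H).trace := by
  set A : Matrix (Fin d) (Fin d) ℝ := 1 + α • (Z * Zᵀ) with hAdef
  have hdetg : HasFDerivAt (fun W : Matrix (Fin d) (Fin n) ℝ =>
      ((1 : Matrix (Fin d) (Fin d) ℝ) + α • (W * Wᵀ)).det)
      (((detCML d).linearDeriv A).comp (gDeriv α Z)) Z :=
    ((detCML d).hasFDerivAt A).comp Z (hasFDerivAt_g α Z)
  have hlog : HasFDerivAt (fun W : Matrix (Fin d) (Fin n) ℝ =>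
      Real.log (((1 : Matrix (Fin d) (Fin d) ℝ) + α • (W * Wᵀ)).det))
      ((A.det)⁻¹ • (((detCML d).linearDeriv A).comp (gDeriv α Z))) Z :=
    (Real.hasDerivAt_log hdet).comp_hasFDerivAt (f := fun W : Matrix (Fin d) (Fin n) ℝ =>
        ((1 : Matrix (Fin d) (Fin d) ℝ) + α • (W * Wᵀ)).det) Z hdetg
  have hfull := hlog.const_mul (1/2 : ℝ)
  erw [hfull.fderiv]
  show (1/2:ℝ) * ((A.det)⁻¹ * ((detCML d).linearDeriv A (gDeriv α Z H))) = _
  have hld : ((detCML d).linearDeriv A) (gDeriv α Z H) = (A.adjugate * (gDeriv α Z H)).trace := by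
    erw [ContinuousMultilinearMap.linearDeriv_apply]
    exact sum_det_updateRow A (gDeriv α Z H)
  erw [hld]
  rw [gDeriv_apply]
  have hAunit : IsUnit A.det := isUnit_iff_ne_zero.mpr hdet
  have hadj : A.adjugate = A.det • A⁻¹ := by
    rw [Matrix.inv_def, Ring.inverse_eq_inv']
    rw [smul_smul, mul_inv_cancel₀ hdet, one_smul]
  rw [hadj]
  have t1 : (A⁻¹ * (H * Zᵀ)).trace = (Zᵀ * A⁻¹ * H).trace := by
    rw [← Matrix.mul_assoc]
    exact Matrix.trace_mul_cycle A⁻¹ H Zᵀ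
  have t2 : (A⁻¹ * (Z * Hᵀ)).trace = (Zᵀ * A⁻¹ * H).trace := by
    rw [← Matrix.trace_transpose (A⁻¹ * (Z * Hᵀ))]
    rw [Matrix.transpose_mul, Matrix.transpose_mul, Matrix.transpose_transpose, hAinvsymm]
    rw [Matrix.mul_assoc]
    exact Matrix.trace_mul_comm H (Zᵀ * A⁻¹)
  rw [Matrix.smul_mul, Matrix.mul_smul, Matrix.mul_add, Matrix.trace_smul, Matrix.trace_smul,
    Matrix.trace_add, t1, t2]
  rw [Matrix.transpose_smul, Matrix.smul_mul, Matrix.trace_smul]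
  rw [Matrix.transpose_mul, hAinvsymm]
  simp only [smul_eq_mul]
  field_simp
  ring

/-- For `Z ∈ ℝ^{d×n}` with unit-norm columns, the gradient `G` of
`Z ↦ R_ε(ZZᵀ/n)` (where `R_ε(Γ) = (1/2) log det (I + (d/ε²) Γ)`) satisfies
`‖G‖_F ≤ √(d · min{d,n} / n) / (2ε)`. -/
theorem stmt_0 (d n : ℕ) (hd : 0 < d) (hn : 0 < n) (ε : ℝ) (hε : 0 < ε)
    (Z : Matrix (Fin d) (Fin n) ℝ)
    (hZ : ∀ j : Fin n, ∑ i : Fin d, (Z i j) ^ 2 = 1)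
    (G : Matrix (Fin d) (Fin n) ℝ)
    (hG : ∀ H : Matrix (Fin d) (Fin n) ℝ,
      fderiv ℝ
        (fun W : Matrix (Fin d) (Fin n) ℝ =>
          (1 / 2 : ℝ) * Real.log ((1 + ((d : ℝ) / ε ^ 2) • ((n : ℝ)⁻¹ • (W * Wᵀ))).det))
        Z H = (Gᵀ * H).trace) :
    frobNorm G ≤ Real.sqrt ((d : ℝ) * ((min d n : ℕ) : ℝ) / (n : ℝ)) / (2 * ε) := by
  show Real.sqrt ((Gᵀ * G).trace) ≤ _
  have hnR : (0:ℝ) < n := by exact_mod_cast hn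
  have hdR : (0:ℝ) < d := by exact_mod_cast hd
  set α : ℝ := (d : ℝ) / ε ^ 2 * (n : ℝ)⁻¹ with hαdef
  have hα : 0 < α := by positivity
  simp only [smul_smul] at hG
  -- positive definiteness facts
  set S : Matrix (Fin d) (Fin d) ℝ := Z * Zᵀ with hSdef
  have hS : S.PosSemidef := by
    have := Matrix.posSemidef_self_mul_conjTranspose Z
    rwa [conjT_eq_T] at this
  set A : Matrix (Fin d) (Fin d) ℝ := 1 + α • S with hAdef
  have hA : A.PosDef := Matrix.PosDef.add_posSemidef Matrix.PosDef.one (psd_smul hS hα.le)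
  have hdet : A.det ≠ 0 := hA.det_pos.ne'
  have hAunit : IsUnit A.det := isUnit_iff_ne_zero.mpr hdet
  have hAinv : A⁻¹ * A = 1 := Matrix.nonsing_inv_mul A hAunit
  have hAinv' : A * A⁻¹ = 1 := Matrix.mul_nonsing_inv A hAunit
  have hSsymm : Sᵀ = S := by
    have h2 : Sᴴ = S := hS.1
    rwa [conjT_eq_T] at h2
  have hAsymm : Aᵀ = A := by
    rw [hAdef]; simp [Matrix.transpose_add, Matrix.transpose_smul, hSsymm]
  have hAinvsymm : (A⁻¹)ᵀ = A⁻¹ := by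
    rw [Matrix.transpose_nonsing_inv, hAsymm]
  -- identify G
  have hGeq : G = α • (A⁻¹ * Z) := by
    ext i j
    have h1 := hG (Matrix.single i j (1:ℝ))
    rw [fderiv_f α Z hdet hAinvsymm] at h1
    have h2 := trace_transpose_mul_std G i j
    have h3 := trace_transpose_mul_std (α • (A⁻¹ * Z)) i j
    rw [h2, h3] at h1
    exact h1.symm
  -- first bound : trace (Gᵀ G) ≤ α/4 * d
  have hbound1 : (Gᵀ * G).trace ≤ α / 4 * d := by
    have htr : (Gᵀ * G).trace = ((α * α) • (A⁻¹ * S * A⁻¹)).trace := by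
      rw [Matrix.trace_mul_comm]
      congr 1
      rw [hGeq, Matrix.transpose_smul, Matrix.smul_mul, Matrix.mul_smul, smul_smul,
        Matrix.transpose_mul, hAinvsymm, hSdef]
      congr 1
      simp only [Matrix.mul_assoc]
    rw [htr]
    exact key_bound hS hα
  -- second bound : trace (Gᵀ G) ≤ α/4 * n
  have hM : (Zᵀ * Z).PosSemidef := by
    have := Matrix.posSemidef_conjTranspose_mul_self Z
    rwa [conjT_eq_T] at this
  set C : Matrix (Fin n) (Fin n) ℝ := 1 + α • (Zᵀ * Z) with hCdef
  have hC : C.PosDef := Matrix.PosDef.add_posSemidef Matrix.PosDef.one (psd_smul hM hα.le)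
  have hCdet : C.det ≠ 0 := hC.det_pos.ne'
  have hCunit : IsUnit C.det := isUnit_iff_ne_zero.mpr hCdet
  have hCinv' : C * C⁻¹ = 1 := Matrix.mul_nonsing_inv C hCunit
  have hMsymm : (Zᵀ * Z)ᵀ = Zᵀ * Z := by
    have h2 : (Zᵀ * Z)ᴴ = Zᵀ * Z := hM.1
    rwa [conjT_eq_T] at h2
  have hCsymm : Cᵀ = C := by
    rw [hCdef]; simp [Matrix.transpose_add, Matrix.transpose_smul, hMsymm]
  have hCinvsymm : (C⁻¹)ᵀ = C⁻¹ := by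
    rw [Matrix.transpose_nonsing_inv, hCsymm]
  have hAZ : A * Z = Z * C := by
    rw [hAdef, hCdef, hSdef]
    rw [Matrix.add_mul, Matrix.mul_add, Matrix.one_mul, Matrix.mul_one,
      Matrix.smul_mul, Matrix.mul_smul, Matrix.mul_assoc]
  have hinvZ : A⁻¹ * Z = Z * C⁻¹ := by
    have h1 : A⁻¹ * (A * Z) * C⁻¹ = Z * C⁻¹ := by
      rw [← Matrix.mul_assoc A⁻¹ A Z, hAinv, Matrix.one_mul]
    have h2 : A⁻¹ * (Z * C) * C⁻¹ = A⁻¹ * Z := by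
      rw [Matrix.mul_assoc A⁻¹ (Z * C) C⁻¹, Matrix.mul_assoc Z C C⁻¹, hCinv', Matrix.mul_one]
    rw [hAZ] at h1
    rw [← h2, h1]
  have hbound2 : (Gᵀ * G).trace ≤ α / 4 * n := by
    have htr : (Gᵀ * G).trace = ((α * α) • (C⁻¹ * (Zᵀ * Z) * C⁻¹)).trace := by
      congr 1
      rw [hGeq, hinvZ, Matrix.transpose_smul, Matrix.smul_mul, Matrix.mul_smul, smul_smul,
        Matrix.transpose_mul, hCinvsymm]
      congr 1
      simp only [Matrix.mul_assoc]
    rw [htr]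
    exact key_bound hM hα
  -- combine
  have hmin : (Gᵀ * G).trace ≤ α / 4 * ((min d n : ℕ) : ℝ) := by
    rcases min_cases d n with ⟨h1, _⟩ | ⟨h1, _⟩ <;> rw [h1]
    · exact hbound1
    · exact hbound2
  have hrhs : α / 4 * ((min d n : ℕ) : ℝ)
      = (Real.sqrt ((d : ℝ) * ((min d n : ℕ) : ℝ) / (n : ℝ)) / (2 * ε)) ^ 2 := by
    rw [div_pow, Real.sq_sqrt (by positivity)]
    rw [hαdef]
    field_simp
    ring
  have := Real.sqrt_le_sqrt (hmin.trans_eq hrhs)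
  rwa [Real.sqrt_sq (by positivity)] at this
end

section
/- Let d, n be positive integers and α > 0. For every matrix Z ∈ ℝ^{d×n}, the Frobenius norm of α·(I + α·ZZᵀ)⁻¹Z satisfies ‖α·(I + α·ZZᵀ)⁻¹Z‖_F ≤ (1/2)·√(α·min{d, n}). -/
open Matrix

lemma aux_smul_psd {m : ℕ} {A : Matrix (Fin m) (Fin m) ℝ} (hA : A.PosSemidef) {c : ℝ}
    (hc : 0 ≤ c) : (c • A).PosSemidef := by
  constructor
  · unfold Matrix.IsHermitian
    rw [conjTranspose_smul, hA.1]
    simp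
  · intro x
    have h := mul_nonneg hc (hA.2 x)
    convert h using 1
    simp only [Finsupp.mul_sum, Matrix.smul_apply, smul_eq_mul]
    exact Finsupp.sum_congr (fun i _ => Finsupp.sum_congr (fun j _ => by ring))

lemma aux_trace_tnn {m k : ℕ} (D : Matrix (Fin m) (Fin k) ℝ) : 0 ≤ (Dᵀ * D).trace := by
  rw [Matrix.trace]
  apply Finset.sum_nonneg
  intro i _
  rw [Matrix.diag, Matrix.mul_apply]
  apply Finset.sum_nonneg
  intro j _
  simpa [Matrix.transpose_apply] using mul_self_nonneg (D j i)

lemma aux_key {m k : ℕ} (α : ℝ) (hα : 0 < α) (W : Matrix (Fin m) (Fin k) ℝ) :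
    ((α ^ 2) • ((1 + α • (W * Wᵀ))⁻¹ * (W * Wᵀ) * (1 + α • (W * Wᵀ))⁻¹)).trace
      ≤ (m : ℝ) * (α / 4) := by
  set A := W * Wᵀ with hAdef
  have hAt : Aᵀ = A := by
    rw [hAdef, transpose_mul, transpose_transpose]
  have hA : A.PosSemidef := by
    have := Matrix.posSemidef_self_mul_conjTranspose W
    simpa [Matrix.conjTranspose_eq_transpose_of_trivial] using this
  set S := 1 + α • A with hSdef
  have hS : S.PosDef := Matrix.PosDef.one.add_posSemidef (aux_smul_psd hA hα.le)
  have hU : IsUnit S.det := hS.det_pos.ne'.isUnit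
  set E := S⁻¹ with hEdef
  have hES : E * S = 1 := Matrix.nonsing_inv_mul S hU
  have hSE : S * E = 1 := Matrix.mul_nonsing_inv S hU
  have hEt : Eᵀ = E := by
    rw [hEdef, Matrix.transpose_nonsing_inv]
    congr 1
    rw [hSdef, transpose_add, transpose_one, transpose_smul, hAt]
  set G := (1 : Matrix (Fin m) (Fin m) ℝ) - α • A with hGdef
  set D := G * E with hDdef
  have hGt : Gᵀ = G := by
    rw [hGdef, transpose_sub, transpose_one, transpose_smul, hAt]
  have hDt : Dᵀ = E * G := by rw [hDdef, transpose_mul, hEt, hGt]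
  have expand : (α / 4) • (S * S) = (α ^ 2) • A + (α / 4) • (G * G) := by
    rw [hSdef, hGdef]
    simp only [add_mul, mul_add, sub_mul, mul_sub, one_mul, mul_one, smul_smul,
      smul_mul_assoc, mul_smul_comm, smul_sub, smul_add]
    module
  have heq : (α ^ 2) • (E * A * E) + (α / 4) • (Dᵀ * D) = (α / 4) • (1 : Matrix (Fin m) (Fin m) ℝ) := by
    have h1 : E * S * S * E = 1 := by rw [hES, one_mul, hSE]
    calc (α ^ 2) • (E * A * E) + (α / 4) • (Dᵀ * D)
        = E * ((α ^ 2) • A + (α / 4) • (G * G)) * E := by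
          rw [hDt, hDdef]
          simp only [Matrix.mul_add, Matrix.add_mul, Matrix.mul_smul, Matrix.smul_mul,
            Matrix.mul_assoc]
      _ = E * ((α / 4) • (S * S)) * E := by rw [expand]
      _ = (α / 4) • (E * S * S * E) := by
          simp only [Matrix.mul_smul, Matrix.smul_mul, Matrix.mul_assoc]
      _ = (α / 4) • (1 : Matrix (Fin m) (Fin m) ℝ) := by rw [h1]
  have htr := congrArg Matrix.trace heq
  rw [trace_add] at htr
  simp only [trace_smul, trace_one, smul_eq_mul, Fintype.card_fin] at htr
  have hnn : 0 ≤ (α / 4) * (Dᵀ * D).trace :=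
    mul_nonneg (by linarith) (aux_trace_tnn D)
  rw [trace_smul, smul_eq_mul]
  linarith

/-- For any `Z ∈ ℝ^{d×n}` and `α > 0`,
`‖α (I + α ZZᵀ)⁻¹ Z‖_F ≤ (1/2) √(α · min{d,n})`. -/
theorem stmt_8 (d n : ℕ) (hd : 0 < d) (hn : 0 < n) (α : ℝ) (hα : 0 < α)
    (Z : Matrix (Fin d) (Fin n) ℝ) :
    frobNorm (α • ((1 + α • (Z * Zᵀ))⁻¹ * Z))
      ≤ (1 / 2 : ℝ) * Real.sqrt (α * ((min d n : ℕ) : ℝ)) := by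
  set A := Z * Zᵀ with hAdef
  set B := Zᵀ * Z with hBdef
  set SA := 1 + α • A with hSAdef
  set SB := 1 + α • B with hSBdef
  set EA := SA⁻¹ with hEAdef
  set EB := SB⁻¹ with hEBdef
  set M := α • (EA * Z) with hMdef
  -- symmetry and invertibility facts
  have hAt : Aᵀ = A := by rw [hAdef, transpose_mul, transpose_transpose]
  have hBt : Bᵀ = B := by rw [hBdef, transpose_mul, transpose_transpose]
  have hApsd : A.PosSemidef := by
    have := Matrix.posSemidef_self_mul_conjTranspose Z
    simpa [Matrix.conjTranspose_eq_transpose_of_trivial] using this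
  have hBpsd : B.PosSemidef := by
    have := Matrix.posSemidef_conjTranspose_mul_self Z
    simpa [Matrix.conjTranspose_eq_transpose_of_trivial] using this
  have hSA : SA.PosDef := Matrix.PosDef.one.add_posSemidef (aux_smul_psd hApsd hα.le)
  have hSB : SB.PosDef := Matrix.PosDef.one.add_posSemidef (aux_smul_psd hBpsd hα.le)
  have hUA : IsUnit SA.det := hSA.det_pos.ne'.isUnit
  have hUB : IsUnit SB.det := hSB.det_pos.ne'.isUnit
  have hEASA : EA * SA = 1 := Matrix.nonsing_inv_mul SA hUA
  have hSBEB : SB * EB = 1 := Matrix.mul_nonsing_inv SB hUB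
  have hEAt : EAᵀ = EA := by
    rw [hEAdef, Matrix.transpose_nonsing_inv]
    congr 1
    rw [hSAdef, transpose_add, transpose_one, transpose_smul, hAt]
  have hEBt : EBᵀ = EB := by
    rw [hEBdef, Matrix.transpose_nonsing_inv]
    congr 1
    rw [hSBdef, transpose_add, transpose_one, transpose_smul, hBt]
  -- push-through
  have hpt : SA * Z = Z * SB := by
    rw [hSAdef, hSBdef, hAdef, hBdef]
    simp only [Matrix.add_mul, Matrix.mul_add, Matrix.one_mul, Matrix.mul_one,
      Matrix.smul_mul, Matrix.mul_smul, Matrix.mul_assoc]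
  have hEZ : EA * Z = Z * EB := by
    have h := congrArg (fun X => EA * X * EB) hpt
    calc EA * Z = EA * Z * (SB * EB) := by rw [hSBEB, Matrix.mul_one]
      _ = EA * (Z * SB) * EB := by simp only [Matrix.mul_assoc]
      _ = EA * (SA * Z) * EB := by rw [hpt]
      _ = (EA * SA) * Z * EB := by simp only [Matrix.mul_assoc]
      _ = Z * EB := by rw [hEASA, Matrix.one_mul]
  -- the two trace bounds
  have hMMt : M * Mᵀ = (α ^ 2) • (EA * A * EA) := by
    rw [hMdef, hAdef]
    rw [transpose_smul, transpose_mul, hEAt]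
    simp only [Matrix.smul_mul, Matrix.mul_smul, smul_smul, Matrix.mul_assoc, ← sq]
  have hMtM : Mᵀ * M = (α ^ 2) • (EB * B * EB) := by
    rw [hMdef, hEZ, hBdef]
    rw [transpose_smul, transpose_mul, hEBt]
    simp only [Matrix.smul_mul, Matrix.mul_smul, smul_smul, Matrix.mul_assoc, ← sq]
  have hbd : (Mᵀ * M).trace ≤ (d : ℝ) * (α / 4) := by
    rw [Matrix.trace_mul_comm, hMMt]
    have := aux_key α hα Z
    simpa [← hAdef, ← hSAdef, ← hEAdef] using this
  have hbn : (Mᵀ * M).trace ≤ (n : ℝ) * (α / 4) := by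
    rw [hMtM]
    have := aux_key α hα Zᵀ
    simpa [transpose_transpose, ← hBdef, ← hSBdef, ← hEBdef] using this
  -- combine
  set c : ℝ := ((min d n : ℕ) : ℝ) with hc
  have hcmin : c = min (d : ℝ) (n : ℝ) := by rw [hc]; push_cast; ring_nf
  have hmin : (Mᵀ * M).trace ≤ c * (α / 4) := by
    rw [hcmin]
    rcases le_total (d : ℝ) (n : ℝ) with h | h
    · rw [min_eq_left h]; exact hbd
    · rw [min_eq_right h]; exact hbn
  have hc0 : 0 ≤ c := by rw [hc]; positivity
  have hsq : Real.sqrt (c * (α / 4)) = (1 / 2 : ℝ) * Real.sqrt (α * c) := by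
    rw [show c * (α / 4) = (1 / 2 : ℝ) ^ 2 * (α * c) by ring,
      Real.sqrt_mul (by positivity), Real.sqrt_sq (by norm_num)]
  calc frobNorm M = Real.sqrt ((Mᵀ * M).trace) := rfl
    _ ≤ Real.sqrt (c * (α / 4)) := Real.sqrt_le_sqrt hmin
    _ = (1 / 2 : ℝ) * Real.sqrt (α * c) := hsq
end
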